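/- Every finite-order bond-separation of a graph G is crossed by only finitely many bond-separations of G of order at most k, for any given k ∈ ℕ. -/

import Mathlib

open SimpleGraph

variable {V : Type*}

/-- The cut induced by a side `A`: edges of `G` with one endpoint in `A` and one outside. -/
def cutEdges (G : SimpleGraph V) (A : Set V) : Set (Sym2 V) :=
  {e | ∃ u v, e = s(u, v) ∧ G.Adj u v ∧ u ∈ A ∧ v ∉ A}

/-- A cut-separation, given by a side `A`: both sides nonempty. -/
def IsCutSep (_G : SimpleGraph V) (A : Set V) : Prop :=
  A.Nonempty ∧ Aᶜ.Nonempty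

/-- A bond-separation: a cut-separation both of whose sides induce connected subgraphs. -/
def IsBondSep (G : SimpleGraph V) (A : Set V) : Prop :=
  A.Nonempty ∧ Aᶜ.Nonempty ∧ (G.induce A).Connected ∧ (G.induce Aᶜ).Connected

/-- Two separations (given by sides) are nested. -/
def Nested (A C : Set V) : Prop :=
  A ⊆ C ∨ A ⊆ Cᶜ ∨ Aᶜ ⊆ C ∨ Aᶜ ⊆ Cᶜ

/-- Two separations cross if they are not nested. -/
def Crosses (A C : Set V) : Prop := ¬ Nested A C

/-- `u` and `v` are (<k)-inseparable: no edge set of size < k separates them. -/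
def Insep (G : SimpleGraph V) (k : ℕ) (u v : V) : Prop :=
  ∀ F : Set (Sym2 V), F.Finite → F.ncard < k → (G.deleteEdges F).Reachable u v

/-- A k-edge-block: an equivalence class of (<k)-inseparability. -/
def IsEdgeBlock (G : SimpleGraph V) (k : ℕ) (B : Set V) : Prop :=
  ∃ v, B = {w | Insep G k v w}

/-- The edge set `F` separates `B₁` from `B₂` in `G`. -/
def SepSets (G : SimpleGraph V) (B₁ B₂ : Set V) (F : Set (Sym2 V)) : Prop :=
  ∀ u ∈ B₁, ∀ v ∈ B₂, ¬ (G.deleteEdges F).Reachable u v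

/-- The minimum size of an edge set separating `B₁` from `B₂`. -/
noncomputable def sepOrder (G : SimpleGraph V) (B₁ B₂ : Set V) : ℕ :=
  sInf {n | ∃ F : Set (Sym2 V), F.Finite ∧ F.ncard = n ∧ SepSets G B₁ B₂ F}


lemma mem_cutEdges' {G : SimpleGraph V} {S : Set V} {a b : V}
    (hadj : G.Adj a b) (ha : a ∈ S) (hb : b ∉ S) : s(a, b) ∈ cutEdges G S :=
  ⟨a, b, rfl, hadj, ha, hb⟩

lemma dart_edge_eq (G : SimpleGraph V) (d : G.Dart) : d.edge = s(d.fst, d.snd) := rfl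

lemma reach_of_induce' (G : SimpleGraph V) {S : Set V} {x y : V}
    (hx : x ∈ S) (hy : y ∈ S) (hc : (G.induce S).Connected) : G.Reachable x y := by
  have h := hc.preconnected ⟨x, hx⟩ ⟨y, hy⟩
  simpa using h.map (SimpleGraph.Embedding.induce S).toHom

lemma induce_deleteEdges_eq' (G : SimpleGraph V) (F : Set (Sym2 V)) (S : Set V)
    (h : ∀ a ∈ S, ∀ b ∈ S, s(a, b) ∉ F) :
    (G.deleteEdges F).induce S = G.induce S := by
  ext ⟨a, ha⟩ ⟨b, hb⟩
  simp only [comap_adj, Function.Embedding.coe_subtype, deleteEdges_adj]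
  exact ⟨fun h' => h'.1, fun h' => ⟨h', h a ha b hb⟩⟩

lemma cutEdges_deleteEdges' (G : SimpleGraph V) (S : Set V) (f : Sym2 V) :
    cutEdges (G.deleteEdges {f}) S = cutEdges G S \ {f} := by
  ext e
  constructor
  · rintro ⟨a, b, rfl, hadj, ha, hb⟩
    rw [deleteEdges_adj] at hadj
    exact ⟨⟨a, b, rfl, hadj.1, ha, hb⟩, hadj.2⟩
  · rintro ⟨⟨a, b, rfl, hadj, ha, hb⟩, hne⟩
    exact ⟨a, b, rfl, deleteEdges_adj.mpr ⟨hadj, hne⟩, ha, hb⟩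

lemma bonds_not_reach (H : SimpleGraph V) (x u : V) (hr : ¬ H.Reachable x u) :
    {S : Set V | x ∈ S ∧ u ∉ S ∧ (H.induce S).Connected ∧ (H.induce Sᶜ).Connected}.Finite := by
  apply Set.Finite.subset (Set.finite_singleton {y | H.Reachable x y})
  rintro S ⟨hx, hu, hcS, hcSc⟩
  simp only [Set.mem_singleton_iff]
  ext y
  constructor
  · exact fun hy => reach_of_induce' H hx hy hcS
  · intro hy
    by_contra hyS
    exact hr (Set.mem_setOf_eq ▸ hy |>.trans
      (reach_of_induce' H (show y ∈ Sᶜ from hyS) (show u ∈ Sᶜ from hu) hcSc))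

lemma bonds_finite (x u : V) : ∀ (k : ℕ) (H : SimpleGraph V),
    {S : Set V | x ∈ S ∧ u ∉ S ∧ (H.induce S).Connected ∧ (H.induce Sᶜ).Connected ∧
      (cutEdges H S).Finite ∧ (cutEdges H S).ncard ≤ k}.Finite := by
  intro k
  induction k with
  | zero =>
    intro H
    by_cases hr : H.Reachable x u
    · convert Set.finite_empty
      ext S
      simp only [Set.mem_setOf_eq, Set.mem_empty_iff_false, iff_false, not_and]
      rintro hx hu hcS hcSc hfin hcard
      have hcut : cutEdges H S = ∅ := (Set.ncard_eq_zero hfin).1 (Nat.le_zero.1 hcard)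
      obtain ⟨p⟩ := hr
      obtain ⟨d, hd, hfst, hsnd⟩ := p.exists_boundary_dart S hx hu
      have : d.edge ∈ cutEdges H S := mem_cutEdges' d.adj hfst hsnd
      rw [hcut] at this
      exact this
    · exact Set.Finite.subset (bonds_not_reach H x u hr)
        (fun S hS => ⟨hS.1, hS.2.1, hS.2.2.1, hS.2.2.2.1⟩)
  | succ k ih =>
    intro H
    by_cases hr : H.Reachable x u
    · obtain ⟨p⟩ := hr
      apply Set.Finite.subset
        ((p.darts.finite_toSet).biUnion (fun d _ => ih (H.deleteEdges {d.edge})))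
      rintro S ⟨hx, hu, hcS, hcSc, hfin, hcard⟩
      obtain ⟨d, hd, hfst, hsnd⟩ := p.exists_boundary_dart S hx hu
      have hmem : d.edge ∈ cutEdges H S := mem_cutEdges' d.adj hfst hsnd
      have hfS : ∀ a ∈ S, ∀ b ∈ S, s(a, b) ∉ ({d.edge} : Set (Sym2 V)) := by
        intro a ha b hb h
        rw [Set.mem_singleton_iff, dart_edge_eq, Sym2.eq_iff] at h
        rcases h with ⟨h1, h2⟩ | ⟨h1, h2⟩
        · exact hsnd (h2 ▸ hb)
        · exact hsnd (h1 ▸ ha)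
      have hfSc : ∀ a ∈ Sᶜ, ∀ b ∈ Sᶜ, s(a, b) ∉ ({d.edge} : Set (Sym2 V)) := by
        intro a ha b hb h
        rw [Set.mem_singleton_iff, dart_edge_eq, Sym2.eq_iff] at h
        rcases h with ⟨h1, h2⟩ | ⟨h1, h2⟩
        · exact ha (h1 ▸ hfst)
        · exact hb (h2 ▸ hfst)
      refine Set.mem_biUnion hd ?_
      refine ⟨hx, hu, ?_, ?_, ?_, ?_⟩
      · rw [induce_deleteEdges_eq' H _ S hfS]; exact hcS
      · rw [induce_deleteEdges_eq' H _ Sᶜ hfSc]; exact hcSc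
      · rw [cutEdges_deleteEdges']; exact hfin.diff
      · rw [cutEdges_deleteEdges', Set.ncard_diff_singleton_of_mem hmem]
        omega
    · exact Set.Finite.subset (bonds_not_reach H x u hr)
        (fun S hS => ⟨hS.1, hS.2.1, hS.2.2.1, hS.2.2.2.1⟩)

lemma sym2_mem_finite (e : Sym2 V) : {v : V | v ∈ e}.Finite := by
  induction e using Sym2.ind with
  | _ a b =>
    have : {v : V | v ∈ s(a, b)} = {a, b} := by
      ext v; simp [Sym2.mem_iff]
    rw [this]
    exact (Set.finite_singleton b).insert a

/-- From two vertices of `C`, one in `A`, one not, with `G.induce C` connected, extract a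
vertex of `C` that is an endpoint of a cut edge of `A`. -/
lemma exists_cut_endpoint (G : SimpleGraph V) {A C : Set V} {a b : V}
    (ha : a ∈ A) (haC : a ∈ C) (hb : b ∉ A) (hbC : b ∈ C)
    (hc : (G.induce C).Connected) :
    ∃ x ∈ C, x ∈ A ∧ ∃ e ∈ cutEdges G A, x ∈ e := by
  obtain ⟨q⟩ := hc.preconnected ⟨a, haC⟩ ⟨b, hbC⟩
  obtain ⟨d, hd, hfst, hsnd⟩ := q.exists_boundary_dart (Subtype.val ⁻¹' A) ha hb
  have hadj : G.Adj (d.fst : V) (d.snd : V) := d.adj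
  exact ⟨d.fst, d.fst.2, hfst,
    s((d.fst : V), (d.snd : V)), mem_cutEdges' hadj hfst hsnd, Sym2.mem_mk_left _ _⟩

/-- Lemma 3.1: a finite-order bond-separation is crossed by only finitely many
bond-separations of order at most k. -/
theorem stmt_3 (G : SimpleGraph V) (A : Set V) (hA : IsBondSep G A)
    (hfin : (cutEdges G A).Finite) (k : ℕ) :
    {C : Set V | IsBondSep G C ∧ (cutEdges G C).Finite ∧
      (cutEdges G C).ncard ≤ k ∧ Crosses A C}.Finite := by
  classical
  set X : Set V := {v | ∃ e ∈ cutEdges G A, v ∈ e} with hXdef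
  have hX : X.Finite := by
    apply Set.Finite.subset (hfin.biUnion (fun e _ => sym2_mem_finite e))
    rintro v ⟨e, he, hv⟩
    exact Set.mem_biUnion he hv
  apply Set.Finite.subset
    (hX.biUnion (fun x _ => hX.biUnion (fun u _ => bonds_finite x u k G)))
  rintro C ⟨⟨hC1, hC2, hC3, hC4⟩, hCfin, hCcard, hcross⟩
  rw [Crosses, Nested] at hcross
  push_neg at hcross
  obtain ⟨h1, h2, h3, h4⟩ := hcross
  obtain ⟨a, haA, haC⟩ := Set.not_subset.1 h1
  obtain ⟨a', ha'A, ha'Cc⟩ := Set.not_subset.1 h2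
  obtain ⟨b, hbA, hbC⟩ := Set.not_subset.1 h3
  obtain ⟨b', hb'A, hb'Cc⟩ := Set.not_subset.1 h4
  have ha'C : a' ∈ C := Set.notMem_compl_iff.1 ha'Cc
  have hb'C : b' ∈ C := Set.notMem_compl_iff.1 hb'Cc
  obtain ⟨x, hxC, hxA, ex, hex, hxe⟩ :=
    exists_cut_endpoint G ha'A ha'C (show b' ∉ A from hb'A) hb'C hC3
  obtain ⟨u, huCc, huA, eu, heu, hue⟩ :=
    exists_cut_endpoint G haA (show a ∈ Cᶜ from haC) (show b ∉ A from hbA)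
      (show b ∈ Cᶜ from hbC) hC4
  exact Set.mem_biUnion (show x ∈ X from ⟨ex, hex, hxe⟩)
    (Set.mem_biUnion (show u ∈ X from ⟨eu, heu, hue⟩)
      ⟨hxC, huCc, hC3, hC4, hCfin, hCcard⟩)
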